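/- Retrodicting a Z-basis measurement with the improper-mixture belief: let S be a qubit, E_{0/1} the CPTP map from S to a two-dimensional classical system T given by E_{0/1}(ρ) = ⟨0|ρ|0⟩ |0̃⟩⟨0̃| + ⟨1|ρ|1⟩ |1̃⟩⟨1̃| (where {|0̃⟩,|1̃⟩} is the standard basis of T), and let β₂ = |Φ⁺⟩⟨Φ⁺| on S⊗R₂ with |Φ⁺⟩ = (|00⟩+|11⟩)/√2 and R₂ a qubit. Then R_ext^{E_{0/1},β₂}(|0̃⟩⟨0̃|) = 1_S/2 and R_ext^{E_{0/1},β₂}(|1̃⟩⟨1̃|) = 1_S/2. -/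

import Mathlib

open Matrix
open scoped Kronecker ComplexOrder


open Classical in
/-- The positive semidefinite square root of a matrix (zero if not PSD). -/
noncomputable def msqrt {n : Type*} [Fintype n] [DecidableEq n] (A : Matrix n n ℂ) :
    Matrix n n ℂ :=
  if h : A.PosSemidef then
    (h.1.eigenvectorUnitary : Matrix n n ℂ) *
      Matrix.diagonal (fun i => ((Real.sqrt (h.1.eigenvalues i) : ℝ) : ℂ)) *
      (star h.1.eigenvectorUnitary : Matrix n n ℂ)
  else 0

/-- `A^{-1/2}`: the (nonsingular) inverse of the PSD square root. -/
noncomputable def invsqrt {n : Type*} [Fintype n] [DecidableEq n] (A : Matrix n n ℂ) :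
    Matrix n n ℂ :=
  (msqrt A)⁻¹

/-- Partial trace over the second factor `R`. -/
noncomputable def ptraceR {S R : Type*} [Fintype R] (M : Matrix (S × R) (S × R) ℂ) : Matrix S S ℂ :=
  Matrix.of fun s s' => ∑ r, M (s, r) (s', r)

/-- A density matrix: positive semidefinite with unit trace. -/
def IsDensity {n : Type*} [Fintype n] (A : Matrix n n ℂ) : Prop :=
  A.PosSemidef ∧ A.trace = 1

/-- The Choi matrix of a linear map between matrix algebras. -/
def choi {S T : Type*} [Fintype S] [DecidableEq S]
    (E : Matrix S S ℂ →ₗ[ℂ] Matrix T T ℂ) : Matrix (S × T) (S × T) ℂ :=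
  Matrix.of fun p q => E (Matrix.single p.1 q.1 1) p.2 q.2

/-- Completely positive trace-preserving map. -/
def IsCPTP {S T : Type*} [Fintype S] [DecidableEq S] [Fintype T]
    (E : Matrix S S ℂ →ₗ[ℂ] Matrix T T ℂ) : Prop :=
  (∀ X, (E X).trace = X.trace) ∧ (choi E).PosSemidef

/-- The Hilbert-Schmidt adjoint `E†`, satisfying `Tr[E(X)† Y] = Tr[X† E†(Y)]`. -/
noncomputable def adjMap {S T : Type*} [Fintype S] [DecidableEq S] [Fintype T]
    (E : Matrix S S ℂ →ₗ[ℂ] Matrix T T ℂ) (Y : Matrix T T ℂ) : Matrix S S ℂ :=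
  Matrix.of fun i j => ((E (Matrix.single i j 1))ᴴ * Y).trace

/-- The original Petz map `R^{E,βS}(σ) = √βS E†(E(βS)^{-1/2} σ E(βS)^{-1/2}) √βS`. -/
noncomputable def petz {S T : Type*} [Fintype S] [DecidableEq S] [Fintype T] [DecidableEq T]
    (E : Matrix S S ℂ →ₗ[ℂ] Matrix T T ℂ) (βS : Matrix S S ℂ) (σ : Matrix T T ℂ) :
    Matrix S S ℂ :=
  msqrt βS * adjMap E (invsqrt (E βS) * σ * invsqrt (E βS)) * msqrt βS

/-- The prior-extended Petz map `R^{E⊗Tr,β}`. -/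
noncomputable def petzExt {S R T : Type*} [Fintype S] [DecidableEq S]
    [Fintype R] [DecidableEq R] [Fintype T] [DecidableEq T]
    (E : Matrix S S ℂ →ₗ[ℂ] Matrix T T ℂ) (β : Matrix (S × R) (S × R) ℂ)
    (σ : Matrix T T ℂ) : Matrix (S × R) (S × R) ℂ :=
  msqrt β *
    (adjMap E (invsqrt (E (ptraceR β)) * σ * invsqrt (E (ptraceR β))) ⊗ₖ (1 : Matrix R R ℂ)) *
    msqrt β

/-- The retrodiction map `R_ext^{E,β} = Tr_R ∘ R^{E⊗Tr,β}`. -/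
noncomputable def retroExt {S R T : Type*} [Fintype S] [DecidableEq S]
    [Fintype R] [DecidableEq R] [Fintype T] [DecidableEq T]
    (E : Matrix S S ℂ →ₗ[ℂ] Matrix T T ℂ) (β : Matrix (S × R) (S × R) ℂ)
    (σ : Matrix T T ℂ) : Matrix S S ℂ :=
  ptraceR (petzExt E β σ)

/-- Two beliefs are equivalent if they induce the same retrodiction map for all channels. -/
def EquivBeliefs {S R₁ R₂ : Type*} [Fintype S] [DecidableEq S]
    [Fintype R₁] [DecidableEq R₁] [Fintype R₂] [DecidableEq R₂]
    (β : Matrix (S × R₁) (S × R₁) ℂ) (γ : Matrix (S × R₂) (S × R₂) ℂ) : Prop :=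
  ∀ (T : Type) (_ : Fintype T) (_ : DecidableEq T)
    (E : Matrix S S ℂ →ₗ[ℂ] Matrix T T ℂ),
    IsCPTP E → (E (ptraceR β)).PosDef → (E (ptraceR γ)).PosDef →
    ∀ σ : Matrix T T ℂ, retroExt E β σ = retroExt E γ σ

/-- Measurement in the basis `{v₀, v₁}`, recorded in the standard basis of a classical bit. -/
noncomputable def meas2 (v₀ v₁ : Fin 2 → ℂ) :
    Matrix (Fin 2) (Fin 2) ℂ →ₗ[ℂ] Matrix (Fin 2) (Fin 2) ℂ where
  toFun ρ := (∑ i, ∑ j, star (v₀ i) * ρ i j * v₀ j) • Matrix.single 0 0 1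
      + (∑ i, ∑ j, star (v₁ i) * ρ i j * v₁ j) • Matrix.single 1 1 1
  map_add' x y := by
    simp only [Matrix.add_apply, mul_add, add_mul, Finset.sum_add_distrib, add_smul]
    abel
  map_smul' c x := by
    have h : ∀ v : Fin 2 → ℂ,
        (∑ i, ∑ j, star (v i) * ((c • x) i j) * v j)
          = c * ∑ i, ∑ j, star (v i) * x i j * v j := by
      intro v
      rw [Finset.mul_sum]
      refine Finset.sum_congr rfl fun i _ => ?_
      rw [Finset.mul_sum]
      refine Finset.sum_congr rfl fun j _ => ?_
      simp only [Matrix.smul_apply, smul_eq_mul]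
      ring
    simp only [RingHom.id_apply, smul_add, smul_smul]
    rw [h, h]

/-- The qubit state `|0⟩`. -/
noncomputable def q0 : Fin 2 → ℂ := ![1, 0]
/-- The qubit state `|1⟩`. -/
noncomputable def q1 : Fin 2 → ℂ := ![0, 1]
/-- The qubit state `|+⟩ = (|0⟩+|1⟩)/√2`. -/
noncomputable def qP : Fin 2 → ℂ := ![(Real.sqrt 2 : ℂ)⁻¹, (Real.sqrt 2 : ℂ)⁻¹]
/-- The qubit state `|−⟩ = (|0⟩−|1⟩)/√2`. -/
noncomputable def qM : Fin 2 → ℂ := ![(Real.sqrt 2 : ℂ)⁻¹, -(Real.sqrt 2 : ℂ)⁻¹]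
/-- The qubit state `|+i⟩ = (|0⟩+i|1⟩)/√2`. -/
noncomputable def qPi : Fin 2 → ℂ := ![(Real.sqrt 2 : ℂ)⁻¹, Complex.I * (Real.sqrt 2 : ℂ)⁻¹]
/-- The qubit state `|−i⟩ = (|0⟩−i|1⟩)/√2`. -/
noncomputable def qMi : Fin 2 → ℂ := ![(Real.sqrt 2 : ℂ)⁻¹, -(Complex.I * (Real.sqrt 2 : ℂ)⁻¹)]
/-- The rank-one projector `|v⟩⟨v|`. -/
noncomputable def proj (v : Fin 2 → ℂ) : Matrix (Fin 2) (Fin 2) ℂ :=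
  Matrix.vecMulVec v (star v)

/-- The maximally entangled state `|Φ⁺⟩ = (|00⟩+|11⟩)/√2` on two qubits. -/
noncomputable def PhiPlus : Fin 2 × Fin 2 → ℂ :=
  fun p => if p.1 = p.2 then ((Real.sqrt 2 : ℂ))⁻¹ else 0


open scoped MatrixOrder in
lemma msqrt_eq_of {n : Type*} [Fintype n] [DecidableEq n] (A B : Matrix n n ℂ)
    (hB : B.PosSemidef) (h : B * B = A) : msqrt A = B := by
  have hA : A.PosSemidef := by rw [← h, ← pow_two]; exact hB.pow 2
  rw [msqrt, dif_pos hA]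
  have h1 : (hA.1.eigenvectorUnitary : Matrix n n ℂ) *
      Matrix.diagonal (fun i => ((Real.sqrt (hA.1.eigenvalues i) : ℝ) : ℂ)) *
      (star hA.1.eigenvectorUnitary : Matrix n n ℂ) = cfc Real.sqrt A := by
    rw [hA.1.cfc_eq, Matrix.IsHermitian.cfc]
    simp [Unitary.conjStarAlgAut_apply, Function.comp_def]
  have h2 := CFC.sqrt_unique h hB.nonneg
  rw [CFC.sqrt_eq_cfc, cfc_nnreal_eq_real _ A] at h2
  rw [h1]
  convert h2 using 2
  funext x
  rw [Real.coe_sqrt, Real.coe_toNNReal']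
  rcases le_total 0 x with hx | hx
  · rw [max_eq_left hx]
  · rw [max_eq_right hx, Real.sqrt_zero, Real.sqrt_eq_zero'.mpr hx]

lemma two_inv_sqrt : ((Real.sqrt 2 : ℂ))⁻¹ * ((Real.sqrt 2 : ℂ))⁻¹ = 2⁻¹ := by
  rw [← mul_inv, ← Complex.ofReal_mul, Real.mul_self_sqrt (by norm_num)]; norm_num

lemma sqrt_two_mul_self : ((Real.sqrt 2 : ℝ) : ℂ) * ((Real.sqrt 2 : ℝ) : ℂ) = 2 := by
  rw [← Complex.ofReal_mul, Real.mul_self_sqrt (by norm_num)]; norm_num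

lemma smul_one_psd {n : Type*} [Fintype n] [DecidableEq n] (c : ℝ) (hc : 0 ≤ c) :
    ((c : ℂ) • (1 : Matrix n n ℂ)).PosSemidef := by
  exact Matrix.PosSemidef.one.smul (by exact_mod_cast hc)

lemma vecMulVec_star_psd {n : Type*} [Fintype n] [DecidableEq n] (v : n → ℂ) :
    (Matrix.vecMulVec v (star v)).PosSemidef := by
  rw [Matrix.vecMulVec_eq (Fin 1)]
  have : Matrix.replicateRow (Fin 1) (star v) = (Matrix.replicateCol (Fin 1) v)ᴴ := by
    ext i j; simp [Matrix.replicateRow, Matrix.replicateCol]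
  rw [this]
  exact Matrix.posSemidef_self_mul_conjTranspose _

lemma msqrt_beta : msqrt (Matrix.vecMulVec PhiPlus (star PhiPlus))
    = Matrix.vecMulVec PhiPlus (star PhiPlus) := by
  refine msqrt_eq_of _ _ (vecMulVec_star_psd _) ?_
  ext p q
  simp only [Matrix.mul_apply, Matrix.vecMulVec_apply, PhiPlus, Pi.star_apply,
    Fintype.sum_prod_type, Fin.sum_univ_two]
  fin_cases p <;> fin_cases q <;>
    simp [apply_ite, two_inv_sqrt] <;> ring_nf <;>
    simp [two_inv_sqrt] <;> ring_nf <;> norm_num [two_inv_sqrt]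

lemma ptraceR_beta : ptraceR (Matrix.vecMulVec PhiPlus (star PhiPlus))
    = (2⁻¹ : ℂ) • (1 : Matrix (Fin 2) (Fin 2) ℂ) := by
  ext s s'
  simp only [ptraceR, Matrix.of_apply, Matrix.vecMulVec_apply, PhiPlus, Pi.star_apply,
    Fin.sum_univ_two]
  fin_cases s <;> fin_cases s' <;>
    simp [Matrix.one_apply, two_inv_sqrt] <;> norm_num [two_inv_sqrt]

lemma sqrt2_ne : ((Real.sqrt 2 : ℝ) : ℂ) ≠ 0 := by
  simp [Real.sqrt_eq_zero']

lemma meas2_half : meas2 q0 q1 ((2⁻¹ : ℂ) • (1 : Matrix (Fin 2) (Fin 2) ℂ))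
    = (2⁻¹ : ℂ) • (1 : Matrix (Fin 2) (Fin 2) ℂ) := by
  show ((_ : ℂ) • _ + _ : Matrix (Fin 2) (Fin 2) ℂ) = _
  ext i j
  fin_cases i <;> fin_cases j <;>
    simp [q0, q1, Fin.sum_univ_two, Matrix.one_apply, Matrix.single]

lemma msqrt_half : msqrt ((2⁻¹ : ℂ) • (1 : Matrix (Fin 2) (Fin 2) ℂ))
    = (((Real.sqrt 2 : ℝ) : ℂ))⁻¹ • (1 : Matrix (Fin 2) (Fin 2) ℂ) := by
  refine msqrt_eq_of _ _ ?_ ?_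
  · have := smul_one_psd (n := Fin 2) (Real.sqrt 2)⁻¹ (by positivity)
    rwa [Complex.ofReal_inv] at this
  · rw [smul_mul_smul_comm, one_mul, two_inv_sqrt]

lemma invsqrt_half : invsqrt ((2⁻¹ : ℂ) • (1 : Matrix (Fin 2) (Fin 2) ℂ))
    = ((Real.sqrt 2 : ℝ) : ℂ) • (1 : Matrix (Fin 2) (Fin 2) ℂ) := by
  rw [invsqrt, msqrt_half]
  apply Matrix.inv_eq_right_inv
  rw [smul_mul_smul_comm, one_mul, inv_mul_cancel₀ sqrt2_ne, one_smul]

lemma adjMap_meas2 (c : ℂ) (t : Fin 2) :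
    adjMap (meas2 q0 q1) (c • Matrix.single t t 1)
      = c • Matrix.single t t 1 := by
  ext i j
  show ((meas2 q0 q1 (Matrix.single i j 1))ᴴ * (c • Matrix.single t t 1)).trace = _
  have : meas2 q0 q1 (Matrix.single i j 1)
      = (∑ a, ∑ b, star (q0 a) * (Matrix.single i j 1) a b * q0 b) •
          Matrix.single 0 0 1
        + (∑ a, ∑ b, star (q1 a) * (Matrix.single i j 1) a b * q1 b) •
          Matrix.single 1 1 1 := rfl
  rw [this]
  fin_cases i <;> fin_cases j <;> fin_cases t <;>
    simp [q0, q1, Fin.sum_univ_two, Matrix.trace, Matrix.diag, Matrix.mul_apply,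
      Matrix.single, Matrix.conjTranspose_apply] <;> ring

lemma final_ptrace (t : Fin 2) :
    ptraceR (Matrix.vecMulVec PhiPlus (star PhiPlus) *
        (((2 : ℂ) • Matrix.single t t 1) ⊗ₖ (1 : Matrix (Fin 2) (Fin 2) ℂ)) *
        Matrix.vecMulVec PhiPlus (star PhiPlus))
      = (1 / 2 : ℂ) • (1 : Matrix (Fin 2) (Fin 2) ℂ) := by
  ext s s'
  simp only [ptraceR, Matrix.of_apply, Matrix.mul_apply, Matrix.vecMulVec_apply,
    Matrix.kroneckerMap_apply, Matrix.smul_apply, PhiPlus, Pi.star_apply,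
    Fintype.sum_prod_type, Fin.sum_univ_two, Matrix.one_apply, Matrix.single,
    Matrix.of_apply, smul_eq_mul]
  fin_cases s <;> fin_cases s' <;> fin_cases t <;>
    simp <;> ring_nf <;> simp [two_inv_sqrt] <;> ring_nf <;>
      norm_num [show ((Real.sqrt 2 : ℝ) : ℂ) ^ 4 = 4 by
        rw [show (4:ℕ) = 2*2 from rfl, pow_mul, pow_two]; rw [pow_two, sqrt_two_mul_self]; norm_num]

/-- Retrodicting a Z-basis measurement with the improper-mixture
belief `β₂ = |Φ⁺⟩⟨Φ⁺|` returns the maximally mixed state for both outcomes. -/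
theorem retro_measZ_improper_mixture :
    retroExt (meas2 q0 q1) (Matrix.vecMulVec PhiPlus (star PhiPlus))
        (Matrix.single (0 : Fin 2) 0 (1 : ℂ))
      = (1 / 2 : ℂ) • (1 : Matrix (Fin 2) (Fin 2) ℂ) ∧
    retroExt (meas2 q0 q1) (Matrix.vecMulVec PhiPlus (star PhiPlus))
        (Matrix.single (1 : Fin 2) 1 (1 : ℂ))
      = (1 / 2 : ℂ) • (1 : Matrix (Fin 2) (Fin 2) ℂ) := by
  constructor <;>
  · rw [retroExt, petzExt, msqrt_beta, ptraceR_beta, meas2_half, invsqrt_half]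
    have hY : ∀ t : Fin 2,
        ((Real.sqrt 2 : ℝ) : ℂ) • (1 : Matrix (Fin 2) (Fin 2) ℂ) *
          Matrix.single t t 1 *
          (((Real.sqrt 2 : ℝ) : ℂ) • (1 : Matrix (Fin 2) (Fin 2) ℂ))
        = (2 : ℂ) • Matrix.single t t 1 := by
      intro t
      rw [Matrix.smul_mul, Matrix.one_mul, Matrix.mul_smul, Matrix.mul_one, smul_smul,
        sqrt_two_mul_self]
    rw [hY, adjMap_meas2, final_ptrace]
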